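/- arXiv:2303.01188 — 3 statements merged into one kernel-verified Lean document; each statement's English description precedes it below -/
import Mathlib

section
/- The average fidelity of a channel with the identity over Haar-random pure input states equals (1 + d·F_ent)/(1 + d), where F_ent is the entanglement fidelity: E_{φ∼Haar}[⟨φ|N(|φ⟩⟨φ|)|φ⟩] = (1 + d·F(J_N,|Ψ⟩⟨Ψ|))/(1 + d). -/
open Matrix MeasureTheory BigOperators

noncomputable instance matMS {d : ℕ} : MeasurableSpace (Matrix (Fin d) (Fin d) ℂ) :=
  MeasurableSpace.pi

/-- The channel with Kraus operators `A`. -/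
noncomputable def krausMap {K d d' : ℕ} (A : Fin K → Matrix (Fin d') (Fin d) ℂ)
    (ρ : Matrix (Fin d) (Fin d) ℂ) : Matrix (Fin d') (Fin d') ℂ :=
  ∑ k, A k * ρ * (A k)ᴴ

/-- The first column `U|0⟩` of a unitary matrix, a Haar-random unit vector
when `U` is Haar-random. -/
noncomputable def col0 {d : ℕ} (hd : 0 < d) (U : Matrix.unitaryGroup (Fin d) ℂ) :
    Fin d → ℂ :=
  fun i => (U : Matrix (Fin d) (Fin d) ℂ) i ⟨0, hd⟩

namespace Stmt3Aux

local notation "conj'" => starRingEnd ℂ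

variable {d : ℕ}

lemma meas_entry (i j : Fin d) :
    Measurable (fun U : Matrix.unitaryGroup (Fin d) ℂ => (U : Matrix (Fin d) (Fin d) ℂ) i j) := by
  have : Measurable (fun M : Matrix (Fin d) (Fin d) ℂ => M i j) :=
    (measurable_pi_apply j).comp (measurable_pi_apply i)
  exact this.comp measurable_subtype_coe

lemma col_norm (U : Matrix.unitaryGroup (Fin d) ℂ) (j : Fin d) :
    ∑ i, conj' ((U : Matrix (Fin d) (Fin d) ℂ) i j) * (U : Matrix (Fin d) (Fin d) ℂ) i j = 1 := by
  have h : (star (U : Matrix (Fin d) (Fin d) ℂ) * U) j j = (1 : Matrix (Fin d) (Fin d) ℂ) j j := by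
    rw [Matrix.UnitaryGroup.star_mul_self]
  simpa [Matrix.mul_apply, Matrix.star_apply] using h

lemma entry_bound (U : Matrix.unitaryGroup (Fin d) ℂ) (i j : Fin d) :
    ‖(U : Matrix (Fin d) (Fin d) ℂ) i j‖ ≤ 1 := by
  have h := col_norm U j
  have h2 : ∑ i, Complex.normSq ((U : Matrix (Fin d) (Fin d) ℂ) i j) = 1 := by
    have := congrArg Complex.re h
    simpa [Complex.normSq, Complex.mul_re, Complex.conj_re, Complex.conj_im,
      Complex.normSq_apply, mul_comm] using this
  have hle : Complex.normSq ((U : Matrix (Fin d) (Fin d) ℂ) i j) ≤ 1 := by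
    rw [← h2]
    exact Finset.single_le_sum (f := fun i => Complex.normSq ((U : Matrix (Fin d) (Fin d) ℂ) i j))
      (fun _ _ => Complex.normSq_nonneg _) (Finset.mem_univ i)
  nlinarith [Complex.sq_norm ((U : Matrix (Fin d) (Fin d) ℂ) i j),
    norm_nonneg ((U : Matrix (Fin d) (Fin d) ℂ) i j)]


variable (hd : 0 < d)

/-- Monomial of four entries of the first column. -/
noncomputable def mono (hd : 0 < d) (i j l m : Fin d) (U : Matrix.unitaryGroup (Fin d) ℂ) : ℂ :=
  col0 hd U j * col0 hd U l * conj' (col0 hd U i) * conj' (col0 hd U m)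

lemma meas_col (i : Fin d) : Measurable (fun U => col0 hd U i) := meas_entry i _

lemma meas_mono (i j l m : Fin d) : Measurable (mono hd i j l m) := by
  unfold mono
  exact (((meas_col hd j).mul (meas_col hd l)).mul
      (Complex.continuous_conj.measurable.comp (meas_col hd i))).mul
      (Complex.continuous_conj.measurable.comp (meas_col hd m))

lemma mono_bound (i j l m : Fin d) (U : Matrix.unitaryGroup (Fin d) ℂ) :
    ‖mono hd i j l m U‖ ≤ 1 := by
  unfold mono
  have b : ∀ r : Fin d, ‖col0 hd U r‖ ≤ 1 := fun r => entry_bound U r _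
  have bc : ∀ r : Fin d, ‖conj' (col0 hd U r)‖ ≤ 1 := by
    intro r; rw [RCLike.norm_conj]; exact b r
  calc ‖col0 hd U j * col0 hd U l * conj' (col0 hd U i) * conj' (col0 hd U m)‖
      = ‖col0 hd U j‖ * ‖col0 hd U l‖ * ‖conj' (col0 hd U i)‖ * ‖conj' (col0 hd U m)‖ := by
        simp [norm_mul]
    _ ≤ 1 := by
        exact mul_le_one₀ (mul_le_one₀ (mul_le_one₀ (b j) (norm_nonneg _) (b l))
          (norm_nonneg _) (bc i)) (norm_nonneg _) (bc m)

variable (μ : Measure (Matrix.unitaryGroup (Fin d) ℂ)) [IsProbabilityMeasure μ]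

lemma integrable_mono (i j l m : Fin d) : Integrable (mono hd i j l m) μ :=
  ⟨(meas_mono hd i j l m).aestronglyMeasurable,
    HasFiniteIntegral.of_bounded (C := 1) (ae_of_all _ (mono_bound hd i j l m))⟩

/-- Measurability of left multiplication on the unitary group. -/
lemma meas_lmul (V : Matrix.unitaryGroup (Fin d) ℂ) :
    Measurable (fun U : Matrix.unitaryGroup (Fin d) ℂ => V * U) := by
  apply Measurable.subtype_mk
  apply measurable_pi_lambda
  intro i
  apply measurable_pi_lambda
  intro j
  simp only [Matrix.mul_apply]
  exact Finset.measurable_sum _ (fun r _ => (meas_entry r j).const_mul _)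

omit [IsProbabilityMeasure μ] in
/-- Left invariance of integrals. -/
lemma integral_lmul (hinv : ∀ V : Matrix.unitaryGroup (Fin d) ℂ, μ.map (fun U => V * U) = μ)
    (V : Matrix.unitaryGroup (Fin d) ℂ) (f : Matrix.unitaryGroup (Fin d) ℂ → ℂ)
    (hf : Measurable f) :
    ∫ U, f (V * U) ∂μ = ∫ U, f U ∂μ := by
  conv_rhs => rw [← hinv V]
  rw [integral_map (meas_lmul V).aemeasurable hf.aestronglyMeasurable]


/-- The fourth moment. -/
noncomputable def M (i j l m : Fin d) : ℂ := ∫ U, mono hd i j l m U ∂μ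

variable (hinv : ∀ V : Matrix.unitaryGroup (Fin d) ℂ, μ.map (fun U => V * U) = μ)

lemma col0_mul (V U : Matrix.unitaryGroup (Fin d) ℂ) (x : Fin d) :
    col0 hd (V * U) x = ∑ r, (V : Matrix (Fin d) (Fin d) ℂ) x r * col0 hd U r := by
  simp [col0, Matrix.UnitaryGroup.mul_apply, Matrix.mul_apply]

lemma aux_pow (n1 n2 : ℕ) (h1 : n1 ≤ 2) (h2 : n2 ≤ 2) (hne : n1 ≠ n2) :
    Complex.I ^ n1 * conj' (Complex.I ^ n2) ≠ 1 := by
  interval_cases n1 <;> interval_cases n2 <;>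
    simp_all [pow_succ, Complex.ext_iff] <;> norm_num

lemma diag_mem (f : Fin d → ℂ) (hf : ∀ q, f q * conj' (f q) = 1) :
    Matrix.diagonal f ∈ Matrix.unitaryGroup (Fin d) ℂ := by
  rw [Matrix.mem_unitaryGroup_iff]
  ext a b
  simp only [Matrix.mul_apply, Matrix.star_apply, Matrix.diagonal_apply, Matrix.one_apply]
  rw [Finset.sum_eq_single a]
  · by_cases hab : a = b
    · subst hab; simpa using hf a
    · have hba : ¬ b = a := fun h => hab h.symm
      simp [hab, hba]
  · intro x _ hx; simp [Ne.symm hx]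
  · intro hq; exact absurd (Finset.mem_univ a) hq

omit [IsProbabilityMeasure μ] in
include hinv in
lemma phase_vanish (p i j l m : Fin d)
    (h : ((if j = p then 1 else 0) + (if l = p then 1 else 0) : ℕ)
        ≠ (if i = p then 1 else 0) + (if m = p then 1 else 0)) :
    M hd μ i j l m = 0 := by
  set f : Fin d → ℂ := fun q => if q = p then Complex.I else 1 with hfdef
  have hf : ∀ q, f q * conj' (f q) = 1 := by
    intro q; by_cases hq : q = p <;> simp [hfdef, hq, Complex.mul_conj]
  set V : Matrix.unitaryGroup (Fin d) ℂ := ⟨Matrix.diagonal f, diag_mem f hf⟩ with hV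
  have hcol : ∀ (U : Matrix.unitaryGroup (Fin d) ℂ) (q : Fin d),
      col0 hd (V * U) q = f q * col0 hd U q := by
    intro U q
    rw [col0_mul]
    simp only [hV]
    rw [Finset.sum_eq_single q]
    · simp [Matrix.diagonal]
    · intro r _ hr; simp [Matrix.diagonal, Ne.symm hr]
    · intro hq; exact absurd (Finset.mem_univ q) hq
  set c : ℂ := f j * f l * conj' (f i) * conj' (f m) with hc
  have key : ∫ U, mono hd i j l m (V * U) ∂μ = M hd μ i j l m :=
    integral_lmul μ hinv V _ (meas_mono hd i j l m)
  have expand : ∀ U, mono hd i j l m (V * U) = c * mono hd i j l m U := by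
    intro U
    unfold mono
    rw [hcol, hcol, hcol, hcol, hc]
    simp only [_root_.map_mul]
    ring
  have key2 : M hd μ i j l m = c * M hd μ i j l m := by
    conv_lhs => rw [← key]
    simp only [expand]
    rw [integral_const_mul]
    rfl
  have hcval : c = Complex.I ^ ((if j = p then 1 else 0) + (if l = p then 1 else 0) : ℕ)
      * conj' (Complex.I ^ ((if i = p then 1 else 0) + (if m = p then 1 else 0) : ℕ)) := by
    have hfq : ∀ q : Fin d, f q = Complex.I ^ (if q = p then 1 else 0 : ℕ) := by
      intro q; by_cases hq : q = p <;> simp [hfdef, hq]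
    rw [hc, hfq j, hfq l, hfq i, hfq m, pow_add, pow_add, _root_.map_mul]
    ring
  have hcne : c ≠ 1 := by
    rw [hcval]
    apply aux_pow
    · split <;> split <;> norm_num
    · split <;> split <;> norm_num
    · exact h
  have hz : (c - 1) * M hd μ i j l m = 0 := by
    rw [sub_mul, one_mul, ← key2, sub_self]
  rcases mul_eq_zero.mp hz with h1 | h2
  · exact absurd (by linear_combination h1 : c = 1) hcne
  · exact h2


lemma perm_mem (σ : Equiv.Perm (Fin d)) :
    (Matrix.of fun q r => if q = σ r then (1:ℂ) else 0) ∈ Matrix.unitaryGroup (Fin d) ℂ := by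
  rw [Matrix.mem_unitaryGroup_iff]
  ext a b
  simp only [Matrix.mul_apply, Matrix.star_apply, Matrix.of_apply, Matrix.one_apply]
  rw [Finset.sum_eq_single (σ.symm a)]
  · by_cases hab : a = b
    · subst hab; simp
    · have : ¬ b = σ (σ.symm a) := by simpa using fun h => hab h.symm
      have hba : ¬ b = a := fun h => hab h.symm
      simp [this, hba, hab]
  · intro x _ hx
    have : ¬ a = σ x := by
      intro h; exact hx (by simp [h])
    simp [this]
  · intro hq; exact absurd (Finset.mem_univ _) hq

omit [IsProbabilityMeasure μ] in
include hinv in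
lemma perm_M (σ : Equiv.Perm (Fin d)) (i j l m : Fin d) :
    M hd μ i j l m = M hd μ (σ i) (σ j) (σ l) (σ m) := by
  set V : Matrix.unitaryGroup (Fin d) ℂ :=
    ⟨Matrix.of fun q r => if q = σ r then (1:ℂ) else 0, perm_mem σ⟩ with hV
  have hcol : ∀ (U : Matrix.unitaryGroup (Fin d) ℂ) (q : Fin d),
      col0 hd (V * U) q = col0 hd U (σ.symm q) := by
    intro U q
    rw [col0_mul]
    simp only [hV]
    rw [Finset.sum_eq_single (σ.symm q)]
    · simp
    · intro x _ hx
      have : ¬ q = σ x := by intro h; exact hx (by simp [h])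
      simp [this]
    · intro hq; exact absurd (Finset.mem_univ _) hq
  have key : ∫ U, mono hd (σ i) (σ j) (σ l) (σ m) (V * U) ∂μ
      = M hd μ (σ i) (σ j) (σ l) (σ m) :=
    integral_lmul μ hinv V _ (meas_mono hd _ _ _ _)
  have expand : ∀ U, mono hd (σ i) (σ j) (σ l) (σ m) (V * U) = mono hd i j l m U := by
    intro U
    unfold mono
    rw [hcol, hcol, hcol, hcol]
    simp
  calc M hd μ i j l m = ∫ U, mono hd (σ i) (σ j) (σ l) (σ m) (V * U) ∂μ := by
        simp only [expand]; rfl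
    _ = _ := key

lemma constraint : ∑ i, ∑ l, M hd μ i i l l = 1 := by
  have hint : ∀ i : Fin d, Integrable (fun U => ∑ l, mono hd i i l l U) μ :=
    fun i => integrable_finset_sum _ (fun l _ => integrable_mono hd μ i i l l)
  have : ∑ i, ∑ l, M hd μ i i l l = ∫ U, ∑ i, ∑ l, mono hd i i l l U ∂μ := by
    rw [integral_finset_sum _ (fun i _ => hint i)]
    refine Finset.sum_congr rfl (fun i _ => ?_)
    rw [integral_finset_sum _ (fun l _ => integrable_mono hd μ i i l l)]
    rfl
  rw [this]
  have hone : ∀ U : Matrix.unitaryGroup (Fin d) ℂ,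
      ∑ i, ∑ l, mono hd i i l l U = 1 := by
    intro U
    have h1 : ∑ i, col0 hd U i * conj' (col0 hd U i) = 1 := by
      have := col_norm U ⟨0, hd⟩
      rw [← this]
      exact Finset.sum_congr rfl (fun i _ => mul_comm _ _)
    calc ∑ i, ∑ l, mono hd i i l l U
        = ∑ i, ∑ l, (col0 hd U i * conj' (col0 hd U i)) * (col0 hd U l * conj' (col0 hd U l)) := by
          refine Finset.sum_congr rfl (fun i _ => Finset.sum_congr rfl (fun l _ => ?_))
          unfold mono; ring
      _ = (∑ i, col0 hd U i * conj' (col0 hd U i)) * (∑ l, col0 hd U l * conj' (col0 hd U l)) := by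
          rw [Finset.sum_mul_sum]
      _ = 1 := by rw [h1, one_mul]
  simp only [hone]
  simp


noncomputable def rotc : ℂ := ((Real.sqrt 2 : ℝ) : ℂ)⁻¹

lemma rotc_conj : conj' rotc = rotc := by
  simp [rotc]

lemma rotc_sq : rotc * rotc = 2⁻¹ := by
  have h2 : ((Real.sqrt 2 : ℝ) : ℂ) * ((Real.sqrt 2 : ℝ) : ℂ) = 2 := by
    rw [← Complex.ofReal_mul, Real.mul_self_sqrt (by norm_num)]
    norm_num
  rw [rotc, ← mul_inv, h2]

noncomputable def rotMat (p q : Fin d) : Matrix (Fin d) (Fin d) ℂ :=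
  Matrix.of fun x y =>
    if x = p then (if y = p then rotc else if y = q then rotc else 0)
    else if x = q then (if y = p then rotc else if y = q then -rotc else 0)
    else if x = y then 1 else 0

lemma two_point_sum (p q : Fin d) (hpq : p ≠ q) (u v : ℂ) (g : Fin d → ℂ) :
    ∑ x, (if x = p then u else if x = q then v else 0) * g x = u * g p + v * g q := by
  have key : ∀ x, (if x = p then u else if x = q then v else 0) * g x
      = (if x = p then u * g x else 0) + (if x = q then v * g x else 0) := by
    intro x
    by_cases h1 : x = p <;> by_cases h2 : x = q
    · exact absurd (h1.symm.trans h2) hpq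
    · simp [h1, h2, hpq]
    · simp [h1, h2, Ne.symm hpq]
    · simp [h1, h2]
  simp only [key]
  rw [Finset.sum_add_distrib, Finset.sum_ite_eq', Finset.sum_ite_eq']
  simp

lemma rot_mem (p q : Fin d) (hpq : p ≠ q) : rotMat p q ∈ Matrix.unitaryGroup (Fin d) ℂ := by
  have hqp : q ≠ p := Ne.symm hpq
  rw [Matrix.mem_unitaryGroup_iff]
  ext a b
  have entry : ∀ x y : Fin d, rotMat p q x y =
      (if x = p then (if y = p then rotc else if y = q then rotc else 0)
      else if x = q then (if y = p then rotc else if y = q then -rotc else 0)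
      else if x = y then 1 else 0) := fun _ _ => rfl
  simp only [Matrix.mul_apply, Matrix.star_apply, Matrix.one_apply, entry]
  by_cases ha : a = p
  · simp only [ha, eq_self_iff_true, if_true]
    rw [two_point_sum p q hpq rotc rotc]
    by_cases hb : b = p
    · have key : rotc * conj' rotc + rotc * conj' rotc = 1 := by
        rw [rotc_conj, show rotc * rotc + rotc * rotc = 2 * (rotc * rotc) by ring, rotc_sq]
        norm_num
      simpa [hb, hqp] using key
    · by_cases hb2 : b = q
      · have key : rotc * conj' rotc + rotc * conj' (-rotc) = 0 := by
          rw [map_neg, rotc_conj]; ring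
        simpa [hb2, hqp, hpq] using key
      · have h2 : ¬ p = b := fun h => hb h.symm
        simp [hb, hb2, h2]
  · by_cases ha2 : a = q
    · simp only [ha2, if_neg hqp, eq_self_iff_true, if_true]
      rw [two_point_sum p q hpq rotc (-rotc)]
      by_cases hb : b = p
      · have key : rotc * conj' rotc + -rotc * conj' rotc = 0 := by
          rw [rotc_conj]; ring
        simpa [hb, hqp] using key
      · by_cases hb2 : b = q
        · have key : rotc * conj' rotc + -rotc * conj' (-rotc) = 1 := by
            rw [map_neg, rotc_conj,
              show rotc * rotc + -rotc * -rotc = 2 * (rotc * rotc) by ring, rotc_sq]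
            norm_num
          simpa [hb2, hqp] using key
        · have h2 : ¬ q = b := fun h => hb2 h.symm
          simp [hb, hb2, h2, hqp]
    · simp only [if_neg ha, if_neg ha2]
      rw [Finset.sum_eq_single a]
      · by_cases hab : a = b
        · simp [← hab, ha, ha2]
        · have hba : ¬ b = a := fun h => hab h.symm
          by_cases hb : b = p <;> by_cases hb2 : b = q <;>
            simp [ha, ha2, hb, hb2, hab, hba, hpq, hqp]
      · intro x _ hx
        simp [Ne.symm hx]
      · intro hq'; exact absurd (Finset.mem_univ _) hq'


omit [IsProbabilityMeasure μ] in
lemma M_congr (i j l m i' j' l' m' : Fin d)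
    (h : ∀ U, mono hd i j l m U = mono hd i' j' l' m' U) :
    M hd μ i j l m = M hd μ i' j' l' m' := by
  unfold M
  exact integral_congr_ae (ae_of_all _ h)

include hinv in
lemma rot_rel (p q : Fin d) (hpq : p ≠ q) :
    M hd μ p p p p = 2 * M hd μ p p q q := by
  have hqp : q ≠ p := Ne.symm hpq
  set V : Matrix.unitaryGroup (Fin d) ℂ := ⟨rotMat p q, rot_mem p q hpq⟩ with hV
  set c : Fin 2 → Fin d := ![p, q] with hc
  have hcolp : ∀ U : Matrix.unitaryGroup (Fin d) ℂ,
      col0 hd (V * U) p = rotc * (col0 hd U p + col0 hd U q) := by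
    intro U
    rw [col0_mul]
    have hrow : ∀ r : Fin d, (V : Matrix (Fin d) (Fin d) ℂ) p r * col0 hd U r
        = (if r = p then rotc else if r = q then rotc else 0) * col0 hd U r := by
      intro r
      congr 1
      show rotMat p q p r = _
      simp [rotMat]
    rw [Finset.sum_congr rfl (fun r _ => hrow r)]
    rw [two_point_sum p q hpq rotc rotc]
    ring
  have key : ∫ U, mono hd p p p p (V * U) ∂μ = M hd μ p p p p :=
    integral_lmul μ hinv V _ (meas_mono hd _ _ _ _)
  have expand : ∀ U, mono hd p p p p (V * U)
      = (4:ℂ)⁻¹ * ∑ t : (Fin 2 × Fin 2) × (Fin 2 × Fin 2),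
          mono hd (c t.2.1) (c t.1.1) (c t.1.2) (c t.2.2) U := by
    intro U
    unfold mono
    rw [hcolp]
    simp only [hc, Fintype.sum_prod_type, Fin.sum_univ_two, Matrix.cons_val_zero,
      Matrix.cons_val_one, Matrix.head_cons, _root_.map_mul, map_add, rotc_conj]
    linear_combination (rotc * rotc + (2:ℂ)⁻¹) * ((col0 hd U p + col0 hd U q) *
      (col0 hd U p + col0 hd U q) * (conj' (col0 hd U p) + conj' (col0 hd U q)) *
      (conj' (col0 hd U p) + conj' (col0 hd U q))) * rotc_sq
  have step : M hd μ p p p p = (4:ℂ)⁻¹ * ∑ t : (Fin 2 × Fin 2) × (Fin 2 × Fin 2),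
      M hd μ (c t.2.1) (c t.1.1) (c t.1.2) (c t.2.2) := by
    rw [← key]
    simp only [expand]
    rw [integral_const_mul, integral_finset_sum _
      (fun t _ => integrable_mono hd μ _ _ _ _)]
    rfl
  have hvan : ∀ i j l m : Fin d,
      ((if j = p then 1 else 0) + (if l = p then 1 else 0) : ℕ)
        ≠ ((if i = p then 1 else 0) + (if m = p then 1 else 0)) → M hd μ i j l m = 0 :=
    fun i j l m h => phase_vanish hd μ hinv p i j l m h
  have e1 : M hd μ p p p q = 0 := hvan _ _ _ _ (by simp [hqp])
  have e2 : M hd μ p p q p = 0 := hvan _ _ _ _ (by simp [hqp])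
  have e3 : M hd μ p q p p = 0 := hvan _ _ _ _ (by simp [hqp])
  have e4 : M hd μ q p p p = 0 := hvan _ _ _ _ (by simp [hqp])
  have e5 : M hd μ q q q p = 0 := hvan _ _ _ _ (by simp [hqp])
  have e6 : M hd μ q q p q = 0 := hvan _ _ _ _ (by simp [hqp])
  have e7 : M hd μ q p q q = 0 := hvan _ _ _ _ (by simp [hqp])
  have e8 : M hd μ p q q q = 0 := hvan _ _ _ _ (by simp [hqp])
  have e10 : M hd μ q p p q = 0 := hvan _ _ _ _ (by simp [hqp])
  have e11 : M hd μ p q q p = 0 := hvan _ _ _ _ (by simp [hqp])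
  have c1 : M hd μ q p q p = M hd μ p p q q :=
    M_congr hd μ _ _ _ _ _ _ _ _ (fun U => by unfold mono; ring)
  have c2 : M hd μ p q p q = M hd μ p p q q :=
    M_congr hd μ _ _ _ _ _ _ _ _ (fun U => by unfold mono; ring)
  have c3 : M hd μ q q p p = M hd μ p p q q :=
    M_congr hd μ _ _ _ _ _ _ _ _ (fun U => by unfold mono; ring)
  have c4 : M hd μ q q q q = M hd μ p p p p := by
    have := perm_M hd μ hinv (Equiv.swap p q) p p p p
    simpa [Equiv.swap_apply_left] using this.symm
  simp only [hc, Fintype.sum_prod_type, Fin.sum_univ_two, Matrix.cons_val_zero,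
    Matrix.cons_val_one, Matrix.head_cons] at step
  rw [e1, e2, e3, e4, e5, e6, e7, e8, e10, e11, c1, c2, c3, c4] at step
  linear_combination 2 * step

lemma count_lemma (i j l m : Fin d)
    (h : ∀ p : Fin d, ((if j = p then 1 else 0) + (if l = p then 1 else 0) : ℕ)
      = (if i = p then 1 else 0) + (if m = p then 1 else 0)) :
    (i = j ∧ l = m) ∨ (j = m ∧ l = i) := by
  by_cases hij : i = j
  · left
    refine ⟨hij, ?_⟩
    by_cases hml : m = l
    · exact hml.symm
    · exfalso
      have hl := h l
      rw [← hij] at hl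
      rw [if_pos rfl, if_neg hml] at hl
      by_cases hil : i = l
      · rw [if_pos hil] at hl; omega
      · rw [if_neg hil] at hl; omega
  · right
    have hj := h j
    simp only [eq_self_iff_true, if_true] at hj
    rw [if_neg hij] at hj
    have hmj : m = j := by
      by_cases hmj : m = j
      · exact hmj
      · exfalso; rw [if_neg hmj] at hj
        by_cases hlj : l = j <;> simp [hlj] at hj
    refine ⟨hmj.symm, ?_⟩
    rw [if_pos hmj] at hj
    have hlj : ¬ l = j := by
      intro hlj'
      rw [if_pos hlj'] at hj
      omega
    have hl := h l
    have hjl : ¬ j = l := fun hh => hlj hh.symm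
    have hml : ¬ m = l := fun hh => hlj (hh.symm.trans hmj)
    rw [if_neg hjl, if_pos rfl, if_neg hml] at hl
    by_cases hil : i = l
    · exact hil.symm
    · rw [if_neg hil] at hl; omega

omit [IsProbabilityMeasure μ] in
include hinv in
lemma M_zero (i j l m : Fin d) (h : ¬((i = j ∧ l = m) ∨ (j = m ∧ l = i))) :
    M hd μ i j l m = 0 := by
  by_cases hc : ∀ p : Fin d, ((if j = p then 1 else 0) + (if l = p then 1 else 0) : ℕ)
      = (if i = p then 1 else 0) + (if m = p then 1 else 0)
  · exact absurd (count_lemma i j l m hc) h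
  · push_neg at hc
    obtain ⟨p, hp⟩ := hc
    exact phase_vanish hd μ hinv p i j l m hp

include hinv in
lemma M_base :
    (∀ i : Fin d, M hd μ i i i i = 2 * ((d:ℂ)^2 + (d:ℂ))⁻¹) ∧
    (∀ i l : Fin d, i ≠ l → M hd μ i i l l = ((d:ℂ)^2 + (d:ℂ))⁻¹) := by
  have hcon := constraint hd μ
  by_cases hd1 : d = 1
  · subst hd1
    constructor
    · intro i
      have h0 : i = ⟨0, hd⟩ := Subsingleton.elim _ _
      rw [h0]
      rw [Fin.sum_univ_one, Fin.sum_univ_one] at hcon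
      have : (0 : Fin 1) = ⟨0, hd⟩ := rfl
      rw [this] at hcon
      rw [hcon]
      norm_num
    · intro i l h; exact absurd (Subsingleton.elim i l) h
  · have hd2 : 1 < d := by omega
    set p : Fin d := ⟨0, hd⟩ with hp
    set q : Fin d := ⟨1, hd2⟩ with hq
    have hpq : p ≠ q := by
      simp [hp, hq, Fin.ext_iff]
    set b : ℂ := M hd μ p p q q with hb
    have hrot := rot_rel hd μ hinv p q hpq
    have hdiag : ∀ i : Fin d, M hd μ i i i i = 2 * b := by
      intro i
      have := perm_M hd μ hinv (Equiv.swap p i) p p p p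
      rw [Equiv.swap_apply_left] at this
      rw [← this, hrot]
    have hoff : ∀ i l : Fin d, i ≠ l → M hd μ i i l l = b := by
      intro i l hil
      set σ1 := Equiv.swap p i with hσ1
      set q' := σ1 q with hq'
      have hq'i : q' ≠ i := by
        intro hh
        have : σ1 q = σ1 p := by rw [← hq', hh, hσ1, Equiv.swap_apply_left]
        exact hpq (σ1.injective this).symm
      have hq'l_ok : i ≠ l := hil
      set σ2 := Equiv.swap q' l with hσ2
      set σ := σ1.trans σ2 with hσ
      have hσp : σ p = i := by
        rw [hσ, Equiv.trans_apply, hσ1, Equiv.swap_apply_left, hσ2]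
        exact Equiv.swap_apply_of_ne_of_ne (Ne.symm hq'i) hil
      have hσq : σ q = l := by
        rw [hσ, Equiv.trans_apply, ← hq', hσ2, Equiv.swap_apply_left]
      have := perm_M hd μ hinv σ p p q q
      rw [hσp, hσq] at this
      rw [← this]
    -- counting
    have hsplit : ∀ i : Fin d, ∑ l, M hd μ i i l l = 2 * b + ((d:ℂ) - 1) * b := by
      intro i
      rw [← Finset.sum_erase_add _ _ (Finset.mem_univ i)]
      rw [hdiag i]
      have : ∑ l ∈ Finset.univ.erase i, M hd μ i i l l
          = ∑ l ∈ Finset.univ.erase i, b := by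
        refine Finset.sum_congr rfl (fun l hl => ?_)
        exact hoff i l (Ne.symm (Finset.mem_erase.mp hl).1)
      rw [this, Finset.sum_const, Finset.card_erase_of_mem (Finset.mem_univ i)]
      simp only [Finset.card_univ, Fintype.card_fin, nsmul_eq_mul]
      push_cast [Nat.cast_sub (by omega : 1 ≤ d)]
      ring
    rw [Finset.sum_congr rfl (fun i _ => hsplit i), Finset.sum_const,
      Finset.card_univ, Fintype.card_fin, nsmul_eq_mul] at hcon
    have hbval : b = ((d:ℂ)^2 + (d:ℂ))⁻¹ := by
      have hdc : ((d:ℂ)^2 + (d:ℂ)) ≠ 0 := by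
        have hcast : ((d:ℂ)^2 + (d:ℂ)) = ((d^2 + d : ℕ) : ℂ) := by push_cast; ring
        rw [hcast]
        exact Nat.cast_ne_zero.mpr (by omega)
      have h1 : ((d:ℂ)^2 + (d:ℂ)) * b = 1 := by linear_combination hcon
      exact (inv_eq_of_mul_eq_one_right h1).symm
    constructor
    · intro i; rw [hdiag i, hbval]
    · intro i l hil; rw [hoff i l hil, hbval]

include hinv in
lemma M_val (i j l m : Fin d) : M hd μ i j l m
    = ((d:ℂ)^2 + (d:ℂ))⁻¹ * ((if i = j ∧ l = m then 1 else 0)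
        + (if j = m ∧ l = i then 1 else 0)) := by
  obtain ⟨hdiag, hoff⟩ := M_base hd μ hinv
  by_cases h1 : i = j ∧ l = m
  · obtain ⟨hij, hlm⟩ := h1
    by_cases h2 : j = m ∧ l = i
    · obtain ⟨hjm, hli⟩ := h2
      rw [if_pos ⟨hij, hlm⟩, if_pos ⟨hjm, hli⟩]
      have hji : j = i := hij.symm
      have hl : l = i := hli
      have hm : m = i := hjm.symm.trans hij.symm
      rw [hji, hl, hm, hdiag i]
      ring
    · rw [if_pos ⟨hij, hlm⟩, if_neg h2]
      have hil : i ≠ l := by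
        intro hh
        exact h2 ⟨hij.symm.trans (hh.trans hlm), hh.symm⟩
      rw [← hij, ← hlm, hoff i l hil]
      ring
  · by_cases h2 : j = m ∧ l = i
    · obtain ⟨hjm, hli⟩ := h2
      rw [if_neg h1, if_pos ⟨hjm, hli⟩]
      have hij : i ≠ j := by
        intro hh
        exact h1 ⟨hh, hli.trans (hh.trans hjm)⟩
      have : M hd μ i j l m = M hd μ i i j j := by
        rw [hli, ← hjm]
        exact M_congr hd μ _ _ _ _ _ _ _ _ (fun U => by unfold mono; ring)
      rw [this, hoff i j hij]
      ring
    · rw [if_neg h1, if_neg h2, M_zero hd μ hinv i j l m (by tauto)]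
      ring

lemma quad_form (B : Matrix (Fin d) (Fin d) ℂ) (v : Fin d → ℂ) :
    star v ⬝ᵥ (B * Matrix.vecMulVec v (star v) * Bᴴ).mulVec v
      = (star v ⬝ᵥ B.mulVec v) * conj' (star v ⬝ᵥ B.mulVec v) := by
  have h1 : (Matrix.vecMulVec v (star v)).mulVec (Bᴴ.mulVec v)
      = (star v ⬝ᵥ Bᴴ.mulVec v) • v := by
    ext t
    calc (Matrix.vecMulVec v (star v)).mulVec (Bᴴ.mulVec v) t
        = ∑ s, v t * (star v s * Bᴴ.mulVec v s) := by
          simp [Matrix.mulVec, dotProduct, Matrix.vecMulVec_apply, mul_assoc]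
      _ = v t * ∑ s, star v s * Bᴴ.mulVec v s := by rw [Finset.mul_sum]
      _ = _ := by
          simp only [Pi.smul_apply, smul_eq_mul, dotProduct]
          ring
  have h2 : star v ⬝ᵥ Bᴴ.mulVec v = conj' (star v ⬝ᵥ B.mulVec v) := by
    have lhs : star v ⬝ᵥ Bᴴ.mulVec v = ∑ x, ∑ y, conj' (v x) * (conj' (B y x) * v y) := by
      simp [dotProduct, Matrix.mulVec, Matrix.conjTranspose_apply, Finset.mul_sum]
    have rhs : conj' (star v ⬝ᵥ B.mulVec v) = ∑ y, ∑ x, v y * (conj' (B y x) * conj' (v x)) := by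
      simp [dotProduct, Matrix.mulVec, map_sum, _root_.map_mul, Finset.mul_sum]
    rw [lhs, rhs, Finset.sum_comm]
    refine Finset.sum_congr rfl fun y _ => Finset.sum_congr rfl fun x _ => by ring
  rw [← Matrix.mulVec_mulVec, ← Matrix.mulVec_mulVec, h1, Matrix.mulVec_smul,
    dotProduct_smul, h2, smul_eq_mul]
  ring

lemma quad_expand (B : Matrix (Fin d) (Fin d) ℂ) (U : Matrix.unitaryGroup (Fin d) ℂ) :
    (star (col0 hd U) ⬝ᵥ B.mulVec (col0 hd U))
        * conj' (star (col0 hd U) ⬝ᵥ B.mulVec (col0 hd U))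
      = ∑ i, ∑ l, ∑ j, ∑ m, B i j * conj' (B l m) * mono hd i j l m U := by
  have hz : star (col0 hd U) ⬝ᵥ B.mulVec (col0 hd U)
      = ∑ i, ∑ j, conj' (col0 hd U i) * (B i j * col0 hd U j) := by
    simp [dotProduct, Matrix.mulVec, Finset.mul_sum]
  rw [hz]
  rw [show conj' (∑ i, ∑ j, conj' (col0 hd U i) * (B i j * col0 hd U j))
      = ∑ l, ∑ m, col0 hd U l * (conj' (B l m) * conj' (col0 hd U m)) by
    simp only [map_sum, _root_.map_mul, RingHomCompTriple.comp_apply, Complex.conj_conj,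
      RingHom.id_apply]]
  rw [Finset.sum_mul_sum]
  refine Finset.sum_congr rfl fun i _ => ?_
  refine Finset.sum_congr rfl fun l _ => ?_
  rw [Finset.sum_mul_sum]
  refine Finset.sum_congr rfl fun j _ => Finset.sum_congr rfl fun m _ => ?_
  unfold mono
  ring

include hinv in
lemma sum_eval (B : Matrix (Fin d) (Fin d) ℂ) :
    ∑ i, ∑ l, ∑ j, ∑ m, B i j * conj' (B l m) * M hd μ i j l m
      = ((d:ℂ)^2 + (d:ℂ))⁻¹ * (B.trace * conj' B.trace
          + ∑ i, ∑ j, B i j * conj' (B i j)) := by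
  set β : ℂ := ((d:ℂ)^2 + (d:ℂ))⁻¹ with hβ
  have inner : ∀ i l : Fin d, ∑ j, ∑ m, B i j * conj' (B l m) * M hd μ i j l m
      = β * (B i i * conj' (B l l)) + (if l = i then β * ∑ j, B i j * conj' (B l j) else 0) := by
    intro i l
    have e : ∀ j m : Fin d, B i j * conj' (B l m) * M hd μ i j l m
        = β * (if l = m then (if i = j then B i j * conj' (B l m) else 0) else 0)
          + (if l = i then β * (if j = m then B i j * conj' (B l m) else 0) else 0) := by
      intro j m
      rw [M_val hd μ hinv i j l m, ← hβ]
      by_cases h1 : i = j <;> by_cases h2 : l = m <;> by_cases h3 : j = m <;>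
        by_cases h4 : l = i <;> simp_all <;> ring
    simp only [e, Finset.sum_add_distrib]
    congr 1
    · simp only [← Finset.mul_sum]
      rw [Finset.sum_congr rfl (fun j (_ : j ∈ Finset.univ) => Finset.sum_ite_eq Finset.univ l
        (fun m => if i = j then B i j * conj' (B l m) else 0))]
      simp [Finset.sum_ite_eq]
    · by_cases hli : l = i
      · simp only [hli, eq_self_iff_true, if_true, mul_ite, mul_zero]
        rw [Finset.sum_congr rfl (fun j (_ : j ∈ Finset.univ) => Finset.sum_ite_eq Finset.univ j
          (fun m => β * (B i j * conj' (B i m))))]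
        simp [Finset.mul_sum]
      · simp [hli]
  have ht : B.trace = ∑ i, B i i := rfl
  have htc : conj' B.trace = ∑ l, conj' (B l l) := by
    rw [ht, map_sum]
  rw [Finset.sum_congr rfl (fun i (_ : i ∈ Finset.univ) =>
    Finset.sum_congr rfl (fun l (_ : l ∈ Finset.univ) => inner i l))]
  simp only [Finset.sum_add_distrib, mul_add]
  congr 1
  · rw [htc, ht, Finset.sum_mul_sum, Finset.mul_sum]
    refine Finset.sum_congr rfl fun i _ => ?_
    rw [Finset.mul_sum]
  · rw [Finset.mul_sum]
    refine Finset.sum_congr rfl fun i _ => ?_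
    rw [Finset.sum_ite_eq' Finset.univ i (fun l => β * ∑ j, B i j * conj' (B l j))]
    simp

end Stmt3Aux

open Stmt3Aux

/-- The average fidelity over Haar-random pure input states equals
`(1 + d·F_ent)/(1 + d)`, where `F_ent = (1/d²) ∑ₖ |Tr Aₖ|²` is the
entanglement fidelity:
`E_{φ∼Haar}[⟨φ|N(|φ⟩⟨φ|)|φ⟩] = (1 + d·F(J_N,|Ψ⟩⟨Ψ|))/(1 + d)`. -/
theorem stmt3 {d K : ℕ} (hd : 0 < d) (A : Fin K → Matrix (Fin d) (Fin d) ℂ)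
    (hA : ∑ k, (A k)ᴴ * A k = 1)
    (μ : Measure (Matrix.unitaryGroup (Fin d) ℂ)) [IsProbabilityMeasure μ]
    (hinv : ∀ V : Matrix.unitaryGroup (Fin d) ℂ, μ.map (fun U => V * U) = μ) :
    (∫ U, (star (col0 hd U) ⬝ᵥ
        (krausMap A (Matrix.vecMulVec (col0 hd U) (star (col0 hd U)))).mulVec
          (col0 hd U)).re ∂μ)
      = (1 + (d : ℝ) * ((1 / (d : ℝ) ^ 2) * ∑ k, ‖(A k).trace‖ ^ 2))
          / (1 + (d : ℝ)) := by
  classical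
  set conj'' := starRingEnd ℂ with hconj
  set β : ℂ := ((d:ℂ)^2 + (d:ℂ))⁻¹ with hβ
  set f : Matrix.unitaryGroup (Fin d) ℂ → ℂ := fun U => star (col0 hd U) ⬝ᵥ
      (krausMap A (Matrix.vecMulVec (col0 hd U) (star (col0 hd U)))).mulVec (col0 hd U) with hf
  have hpt0 : ∀ v : Fin d → ℂ,
      star v ⬝ᵥ (krausMap A (Matrix.vecMulVec v (star v))).mulVec v
        = ∑ k, (star v ⬝ᵥ (A k).mulVec v) * conj'' (star v ⬝ᵥ (A k).mulVec v) := by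
    intro v
    have step1 : ∀ x, (krausMap A (Matrix.vecMulVec v (star v))).mulVec v x
        = ∑ k, (A k * Matrix.vecMulVec v (star v) * (A k)ᴴ).mulVec v x := by
      intro x
      unfold krausMap
      simp only [Matrix.mulVec, dotProduct, Matrix.sum_apply, Finset.sum_mul]
      exact Finset.sum_comm
    have step2 : star v ⬝ᵥ (krausMap A (Matrix.vecMulVec v (star v))).mulVec v
        = ∑ k, star v ⬝ᵥ (A k * Matrix.vecMulVec v (star v) * (A k)ᴴ).mulVec v := by
      simp only [dotProduct]
      rw [Finset.sum_congr rfl fun x (_ : x ∈ Finset.univ) => by rw [step1 x, Finset.mul_sum]]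
      exact Finset.sum_comm
    rw [step2]
    exact Finset.sum_congr rfl fun k _ => quad_form (A k) v
  have hpt : ∀ U, f U = ∑ k, ∑ i, ∑ l, ∑ j, ∑ m,
      (A k) i j * conj'' ((A k) l m) * mono hd i j l m U := by
    intro U
    have h0 : f U = star (col0 hd U) ⬝ᵥ (krausMap A
        (Matrix.vecMulVec (col0 hd U) (star (col0 hd U)))).mulVec (col0 hd U) := rfl
    rw [h0, hpt0 (col0 hd U)]
    exact Finset.sum_congr rfl fun k _ => quad_expand hd (A k) U
  -- integrability
  have I0 : ∀ (k : Fin K) (i l j m : Fin d),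
      Integrable (fun U => (A k) i j * conj'' ((A k) l m) * mono hd i j l m U) μ :=
    fun k i l j m => (integrable_mono hd μ i j l m).const_mul _
  have I1 : ∀ k i l j, Integrable (fun U => ∑ m,
      (A k) i j * conj'' ((A k) l m) * mono hd i j l m U) μ :=
    fun k i l j => integrable_finset_sum _ fun m _ => I0 k i l j m
  have I2 : ∀ k i l, Integrable (fun U => ∑ j, ∑ m,
      (A k) i j * conj'' ((A k) l m) * mono hd i j l m U) μ :=
    fun k i l => integrable_finset_sum _ fun j _ => I1 k i l j
  have I3 : ∀ k i, Integrable (fun U => ∑ l, ∑ j, ∑ m,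
      (A k) i j * conj'' ((A k) l m) * mono hd i j l m U) μ :=
    fun k i => integrable_finset_sum _ fun l _ => I2 k i l
  have I4 : ∀ k, Integrable (fun U => ∑ i, ∑ l, ∑ j, ∑ m,
      (A k) i j * conj'' ((A k) l m) * mono hd i j l m U) μ :=
    fun k => integrable_finset_sum _ fun i _ => I3 k i
  have I5 : Integrable (fun U => ∑ k, ∑ i, ∑ l, ∑ j, ∑ m,
      (A k) i j * conj'' ((A k) l m) * mono hd i j l m U) μ :=
    integrable_finset_sum _ fun k _ => I4 k
  have hfint : Integrable f μ := by
    have : f = fun U => ∑ k, ∑ i, ∑ l, ∑ j, ∑ m,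
        (A k) i j * conj'' ((A k) l m) * mono hd i j l m U := funext hpt
    rw [this]; exact I5
  -- value of the complex integral
  have hig : ∫ U, f U ∂μ
      = ∑ k, β * ((A k).trace * conj'' ((A k).trace)
          + ∑ i, ∑ j, (A k) i j * conj'' ((A k) i j)) := by
    have : f = fun U => ∑ k, ∑ i, ∑ l, ∑ j, ∑ m,
        (A k) i j * conj'' ((A k) l m) * mono hd i j l m U := funext hpt
    rw [this, integral_finset_sum _ fun k _ => I4 k]
    refine Finset.sum_congr rfl fun k _ => ?_
    calc ∫ U, (∑ i, ∑ l, ∑ j, ∑ m,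
          (A k) i j * conj'' ((A k) l m) * mono hd i j l m U) ∂μ
        = ∑ i, ∑ l, ∑ j, ∑ m, (A k) i j * conj'' ((A k) l m) * M hd μ i j l m := by
          rw [integral_finset_sum _ fun i _ => I3 k i]
          refine Finset.sum_congr rfl fun i _ => ?_
          rw [integral_finset_sum _ fun l _ => I2 k i l]
          refine Finset.sum_congr rfl fun l _ => ?_
          rw [integral_finset_sum _ fun j _ => I1 k i l j]
          refine Finset.sum_congr rfl fun j _ => ?_
          rw [integral_finset_sum _ fun m _ => I0 k i l j m]
          refine Finset.sum_congr rfl fun m _ => ?_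
          rw [integral_const_mul]
          rfl
      _ = _ := sum_eval hd μ hinv (A k)
  have hS : ∑ k, ∑ i, ∑ j, (A k) i j * conj'' ((A k) i j) = (d:ℂ) := by
    calc ∑ k, ∑ i, ∑ j, (A k) i j * conj'' ((A k) i j) = ∑ k, ((A k)ᴴ * A k).trace := by
          refine Finset.sum_congr rfl fun k _ => ?_
          rw [Matrix.trace]
          simp only [Matrix.diag, Matrix.mul_apply, Matrix.conjTranspose_apply]
          rw [Finset.sum_comm]
          exact Finset.sum_congr rfl fun j _ => Finset.sum_congr rfl fun i _ => mul_comm _ _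
      _ = (d:ℂ) := by rw [← Matrix.trace_sum, hA, Matrix.trace_one]; simp
  set S : ℝ := ∑ k, ‖(A k).trace‖ ^ 2 with hSdef
  have hT : ∑ k, β * ((A k).trace * conj'' ((A k).trace)
      + ∑ i, ∑ j, (A k) i j * conj'' ((A k) i j)) = β * ((S:ℂ) + (d:ℂ)) := by
    rw [← Finset.mul_sum, Finset.sum_add_distrib, hS]
    congr 2
    rw [hSdef]
    push_cast
    refine Finset.sum_congr rfl fun k _ => ?_
    rw [hconj, Complex.mul_conj, Complex.normSq_eq_norm_sq]
    norm_cast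
  have hre : ∫ U, (f U).re ∂μ = (∫ U, f U ∂μ).re := by
    have := integral_re (𝕜 := ℂ) hfint (μ := μ)
    simpa [RCLike.re_to_complex] using this
  calc ∫ U, (star (col0 hd U) ⬝ᵥ
        (krausMap A (Matrix.vecMulVec (col0 hd U) (star (col0 hd U)))).mulVec
          (col0 hd U)).re ∂μ
      = ∫ U, (f U).re ∂μ := rfl
    _ = (∫ U, f U ∂μ).re := hre
    _ = (β * ((S:ℂ) + (d:ℂ))).re := by rw [hig, hT]
    _ = (((d:ℝ)^2 + (d:ℝ))⁻¹ * (S + (d:ℝ))) := by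
        rw [hβ, show ((d:ℂ)^2 + (d:ℂ))⁻¹ * ((S:ℂ) + (d:ℂ))
          = ((((d:ℝ)^2 + (d:ℝ))⁻¹ * (S + (d:ℝ)) : ℝ) : ℂ) by push_cast; ring,
          Complex.ofReal_re]
    _ = (1 + (d : ℝ) * ((1 / (d : ℝ) ^ 2) * S)) / (1 + (d : ℝ)) := by
        have hdne : (d:ℝ) ≠ 0 := Nat.cast_ne_zero.mpr (by omega)
        have h1 : (d:ℝ)^2 + (d:ℝ) ≠ 0 := by positivity
        have h2 : 1 + (d:ℝ) ≠ 0 := by positivity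
        field_simp
        ring
end

section
/- Let M = Σ_k A_k ⊗ Ā_k where {A_k} are Kraus operators of a channel N. Then Tr(M†M) = Σ_{k,l}|Tr(A_k†A_l)|² = d_in/d_out + η², the largest eigenvalue λ₁ of M†M satisfies λ₁ ≥ d_in/d_out, the remaining eigenvalues sum to at most η², and ⟨Ψ|MM†|Ψ⟩ = d_in/d_out. -/
open Matrix BigOperators Kronecker

/-- `M = ∑ₖ Aₖ ⊗ Āₖ` where `Āₖ` is the entrywise conjugate. -/
noncomputable def Mop {K din dout : ℕ} (A : Fin K → Matrix (Fin dout) (Fin din) ℂ) :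
    Matrix (Fin dout × Fin dout) (Fin din × Fin din) ℂ :=
  ∑ k, (A k) ⊗ₖ ((A k).map (starRingEnd ℂ))

/-- The maximally entangled unit vector `|Ψ⟩ = (1/√d) ∑ᵢ |i⟩⊗|i⟩`. -/
noncomputable def maxEnt (d : ℕ) : Fin d × Fin d → ℂ :=
  fun p => if p.1 = p.2 then ((Real.sqrt d : ℝ) : ℂ)⁻¹ else 0

lemma kron_conjT {a b c d : ℕ} (X : Matrix (Fin a) (Fin b) ℂ) (Y : Matrix (Fin c) (Fin d) ℂ) :
    (X ⊗ₖ Y)ᴴ = Xᴴ ⊗ₖ Yᴴ := by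
  ext ⟨i, j⟩ ⟨k, l⟩
  simp [conjTranspose_apply, kroneckerMap_apply]

lemma map_conjT {a b : ℕ} (X : Matrix (Fin a) (Fin b) ℂ) :
    (X.map (starRingEnd ℂ))ᴴ = Xᴴ.map (starRingEnd ℂ) := by
  ext i j; simp [conjTranspose_apply]

lemma MopH_mul {K din dout : ℕ} (A : Fin K → Matrix (Fin dout) (Fin din) ℂ) :
    (Mop A)ᴴ * Mop A
      = ∑ k, ∑ l, ((A k)ᴴ * A l) ⊗ₖ (((A k)ᴴ * A l).map (starRingEnd ℂ)) := by
  simp only [Mop, conjTranspose_sum]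
  rw [Matrix.sum_mul]
  simp only [Matrix.mul_sum]
  refine Finset.sum_congr rfl fun k _ => Finset.sum_congr rfl fun l _ => ?_
  rw [kron_conjT, map_conjT, Matrix.map_mul, mul_kronecker_mul]

lemma Mop_mulH {K din dout : ℕ} (A : Fin K → Matrix (Fin dout) (Fin din) ℂ) :
    Mop A * (Mop A)ᴴ
      = ∑ k, ∑ l, (A k * (A l)ᴴ) ⊗ₖ ((A k * (A l)ᴴ).map (starRingEnd ℂ)) := by
  simp only [Mop, conjTranspose_sum]
  rw [Matrix.sum_mul]
  simp only [Matrix.mul_sum]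
  refine Finset.sum_congr rfl fun k _ => Finset.sum_congr rfl fun l _ => ?_
  rw [kron_conjT, map_conjT, Matrix.map_mul, mul_kronecker_mul]

lemma trace_map_conj {a : ℕ} (X : Matrix (Fin a) (Fin a) ℂ) :
    (X.map (starRingEnd ℂ)).trace = starRingEnd ℂ X.trace := by
  simp [Matrix.trace, Matrix.diag, map_sum]

lemma dot_maxEnt_kron {d : ℕ} (X Y : Matrix (Fin d) (Fin d) ℂ) :
    star (maxEnt d) ⬝ᵥ ((X ⊗ₖ Y).mulVec (maxEnt d)) = ((d : ℂ))⁻¹ * ∑ i, ∑ j, X i j * Y i j := by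
  have hc : (starRingEnd ℂ) ((Real.sqrt d : ℝ) : ℂ)⁻¹ * ((Real.sqrt d : ℝ) : ℂ)⁻¹
      = ((d : ℂ))⁻¹ := by
    rw [← Complex.ofReal_inv, Complex.conj_ofReal, ← Complex.ofReal_mul, ← mul_inv,
      Real.mul_self_sqrt (Nat.cast_nonneg d), ← Complex.ofReal_natCast, ← Complex.ofReal_inv]
  simp only [dotProduct, mulVec, maxEnt, Pi.star_apply, Fintype.sum_prod_type,
    kroneckerMap_apply, dotProduct]
  simp only [apply_ite (star : ℂ → ℂ), star_zero, ite_mul, zero_mul, mul_ite, mul_zero, Finset.sum_ite_eq, Finset.mem_univ, if_true]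
  rw [← hc, Finset.mul_sum]
  refine Finset.sum_congr rfl fun i _ => ?_
  rw [← Finset.sum_mul]
  simp only [starRingEnd_apply]
  ring

lemma dot_mulVec_sum {m n ι : Type*} [Fintype m] [Fintype n] (v : m → ℂ) (w : n → ℂ)
    (s : Finset ι) (M : ι → Matrix m n ℂ) :
    v ⬝ᵥ (∑ i ∈ s, M i) *ᵥ w = ∑ i ∈ s, v ⬝ᵥ (M i) *ᵥ w := by
  have h : (∑ i ∈ s, M i) *ᵥ w = ∑ i ∈ s, (M i) *ᵥ w := by
    ext j
    simp only [mulVec, dotProduct, Matrix.sum_apply, Finset.sum_mul, Finset.sum_apply]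
    exact Finset.sum_comm
  rw [h]
  simp only [dotProduct, Finset.sum_apply, Finset.mul_sum]
  exact Finset.sum_comm

lemma sum_conj_eq_trace {a b : ℕ} (X : Matrix (Fin a) (Fin b) ℂ) :
    ∑ i, ∑ j, X i j * (X.map (starRingEnd ℂ)) i j = (X * Xᴴ).trace := by
  simp [Matrix.trace, Matrix.diag, Matrix.mul_apply, conjTranspose_apply, Matrix.map_apply]

lemma maxEnt_norm {d : ℕ} (hd : 0 < d) : star (maxEnt d) ⬝ᵥ maxEnt d = 1 := by
  have hc : (starRingEnd ℂ) ((Real.sqrt d : ℝ) : ℂ)⁻¹ * ((Real.sqrt d : ℝ) : ℂ)⁻¹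
      = ((d : ℂ))⁻¹ := by
    rw [← Complex.ofReal_inv, Complex.conj_ofReal, ← Complex.ofReal_mul, ← mul_inv,
      Real.mul_self_sqrt (Nat.cast_nonneg d), ← Complex.ofReal_natCast, ← Complex.ofReal_inv]
  simp only [dotProduct, maxEnt, Pi.star_apply, Fintype.sum_prod_type,
    apply_ite (star : ℂ → ℂ), star_zero, ite_mul, zero_mul, mul_ite, mul_zero,
    Finset.sum_ite_eq, Finset.mem_univ, if_true]
  rw [Finset.sum_const, Finset.card_univ, Fintype.card_fin, ← starRingEnd_apply, hc,
    nsmul_eq_mul]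
  rw [mul_inv_cancel₀]
  exact Nat.cast_ne_zero.mpr hd.ne'

lemma trace_re_eq_sum_eigenvalues {n : Type*} [Fintype n] [DecidableEq n]
    {H : Matrix n n ℂ} (hH : H.IsHermitian) :
    H.trace.re = ∑ i, hH.eigenvalues i := by
  conv_lhs => rw [hH.spectral_theorem, Unitary.conjStarAlgAut_apply]
  rw [Matrix.trace_mul_comm, ← Matrix.mul_assoc,
    Matrix.mem_unitaryGroup_iff'.mp (hH.eigenvectorUnitary).2, Matrix.one_mul,
    Matrix.trace_diagonal]
  simp [Complex.re_sum]

lemma rayleigh {n : Type*} [Fintype n] [DecidableEq n] [Nonempty n]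
    {H : Matrix n n ℂ} (hH : H.IsHermitian) (v : n → ℂ) (hv : star v ⬝ᵥ v = 1) :
    (star v ⬝ᵥ H.mulVec v).re ≤ ⨆ i, hH.eigenvalues i := by
  set U : Matrix n n ℂ := (hH.eigenvectorUnitary : Matrix n n ℂ) with hU
  set w : n → ℂ := (star U) *ᵥ v with hwdef
  have hsw : star w = star v ᵥ* U := by
    rw [hwdef, star_mulVec, star_eq_conjTranspose, conjTranspose_conjTranspose]
  have key : ∀ D : Matrix n n ℂ, star v ⬝ᵥ (U * D * star U) *ᵥ v = star w ⬝ᵥ D *ᵥ w := by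
    intro D
    rw [← mulVec_mulVec, ← mulVec_mulVec, dotProduct_mulVec, ← hsw, hwdef]
  have hw1 : ∑ i, Complex.normSq (w i) = 1 := by
    have h1 : star w ⬝ᵥ w = 1 := by
      have h2 := key 1
      rw [Matrix.mul_one, Matrix.mem_unitaryGroup_iff.mp (hH.eigenvectorUnitary).2,
        Matrix.one_mulVec, Matrix.one_mulVec] at h2
      rw [← h2, hv]
    have := congrArg Complex.re h1
    rw [dotProduct, Complex.re_sum] at this
    simpa [Pi.star_apply, ← Complex.normSq_eq_conj_mul_self, ← starRingEnd_apply] using this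
  have hquad : star v ⬝ᵥ H.mulVec v
      = ∑ i, ((hH.eigenvalues i : ℂ)) * ((Complex.normSq (w i) : ℝ) : ℂ) := by
    conv_lhs => rw [hH.spectral_theorem, Unitary.conjStarAlgAut_apply]
    rw [key, dotProduct]
    refine Finset.sum_congr rfl fun i _ => ?_
    simp only [mulVec_diagonal, Pi.star_apply, Function.comp_apply]
    rw [Complex.normSq_eq_conj_mul_self, ← starRingEnd_apply]
    exact mul_left_comm ((starRingEnd ℂ) (w i)) ((hH.eigenvalues i : ℂ)) (w i)
  rw [hquad, Complex.re_sum]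
  have hstep : ∀ i, ((hH.eigenvalues i : ℂ) * ((Complex.normSq (w i) : ℝ) : ℂ)).re
      = hH.eigenvalues i * Complex.normSq (w i) := by
    intro i; rw [← Complex.ofReal_mul, Complex.ofReal_re]
  simp only [hstep]
  have hbdd : BddAbove (Set.range hH.eigenvalues) := Set.Finite.bddAbove (Set.finite_range _)
  calc ∑ i, hH.eigenvalues i * Complex.normSq (w i)
      ≤ ∑ i, (⨆ j, hH.eigenvalues j) * Complex.normSq (w i) :=
        Finset.sum_le_sum fun i _ =>
          mul_le_mul_of_nonneg_right (le_ciSup hbdd i) (Complex.normSq_nonneg _)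
    _ = (⨆ j, hH.eigenvalues j) * ∑ i, Complex.normSq (w i) := by rw [← Finset.mul_sum]
    _ = ⨆ j, hH.eigenvalues j := by rw [hw1, mul_one]

section Main
variable {K din dout : ℕ} (A : Fin K → Matrix (Fin dout) (Fin din) ℂ)

lemma tr1 (hA : ∑ k, (A k)ᴴ * A k = 1) :
    ∑ k, ∑ l, ((A k * (A l)ᴴ) * (A k * (A l)ᴴ)ᴴ).trace = (din : ℂ) := by
  have hterm : ∀ k l : Fin K, (A k * (A l)ᴴ) * (A k * (A l)ᴴ)ᴴ
      = A k * ((A l)ᴴ * A l) * (A k)ᴴ := by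
    intro k l
    rw [conjTranspose_mul, conjTranspose_conjTranspose]
    simp only [Matrix.mul_assoc]
  calc ∑ k, ∑ l, ((A k * (A l)ᴴ) * (A k * (A l)ᴴ)ᴴ).trace
      = ∑ k, (A k * (∑ l, (A l)ᴴ * A l) * (A k)ᴴ).trace := by
        refine Finset.sum_congr rfl fun k _ => ?_
        simp only [hterm]
        rw [Matrix.mul_sum, Matrix.sum_mul, trace_sum]
    _ = ∑ k, ((A k)ᴴ * A k).trace := by
        refine Finset.sum_congr rfl fun k _ => ?_
        rw [hA, Matrix.mul_one, Matrix.trace_mul_comm]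
    _ = (din : ℂ) := by
        rw [← trace_sum, hA, trace_one]
        simp

lemma tr2 : ∑ k, ∑ l, (((A k)ᴴ * A l) * ((A k)ᴴ * A l)ᴴ).trace
    = ((∑ k, A k * (A k)ᴴ) * (∑ l, A l * (A l)ᴴ)).trace := by
  rw [Matrix.sum_mul]
  simp only [Matrix.mul_sum, trace_sum]
  refine Finset.sum_congr rfl fun k _ => Finset.sum_congr rfl fun l _ => ?_
  have h1 : ((A k)ᴴ * A l) * ((A k)ᴴ * A l)ᴴ = (A k)ᴴ * (A l * ((A l)ᴴ * A k)) := by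
    rw [conjTranspose_mul, conjTranspose_conjTranspose]
    simp only [Matrix.mul_assoc]
  rw [h1, Matrix.trace_mul_comm]
  have h2 : (A l * ((A l)ᴴ * A k)) * (A k)ᴴ = (A l * (A l)ᴴ) * (A k * (A k)ᴴ) := by
    simp only [Matrix.mul_assoc]
  rw [h2, Matrix.trace_mul_comm]

lemma trB (hA : ∑ k, (A k)ᴴ * A k = 1) :
    (∑ k, A k * (A k)ᴴ).trace = (din : ℂ) := by
  rw [trace_sum]
  have h : ∀ k, (A k * (A k)ᴴ).trace = ((A k)ᴴ * A k).trace :=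
    fun k => Matrix.trace_mul_comm _ _
  simp only [h]
  rw [← trace_sum, hA, trace_one]
  simp

lemma cs {d : ℕ} (hd : 0 < d) {B : Matrix (Fin d) (Fin d) ℂ} (hB : B.IsHermitian) :
    B.trace.re ^ 2 / d ≤ ((B * B).trace).re := by
  have hsym : ∀ i j, B j i = starRingEnd ℂ (B i j) := by
    intro i j
    calc B j i = Bᴴ j i := (congrFun (congrFun hB j) i).symm
      _ = starRingEnd ℂ (B i j) := by rw [conjTranspose_apply, starRingEnd_apply]
  have htr : ((B * B).trace).re = ∑ i, ∑ j, Complex.normSq (B i j) := by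
    simp only [Matrix.trace, Matrix.diag, Matrix.mul_apply]
    rw [Complex.re_sum]
    refine Finset.sum_congr rfl fun i _ => ?_
    rw [Complex.re_sum]
    refine Finset.sum_congr rfl fun j _ => ?_
    rw [hsym i j, Complex.mul_conj, Complex.ofReal_re]
  have hdiag : ∑ i, (B i i).re ^ 2 ≤ ∑ i, ∑ j, Complex.normSq (B i j) := by
    refine Finset.sum_le_sum fun i _ => ?_
    calc (B i i).re ^ 2 ≤ Complex.normSq (B i i) := by
          rw [sq]; exact Complex.re_sq_le_normSq _
      _ ≤ ∑ j, Complex.normSq (B i j) :=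
          Finset.single_le_sum (fun j _ => Complex.normSq_nonneg _) (Finset.mem_univ i)
  have htrB : B.trace.re = ∑ i, (B i i).re := by
    simp [Matrix.trace, Matrix.diag, Complex.re_sum]
  have hcs : (∑ i, (B i i).re) ^ 2 ≤ d * ∑ i, (B i i).re ^ 2 := by
    have h := Finset.sum_mul_sq_le_sq_mul_sq Finset.univ (fun _ : Fin d => (1 : ℝ))
      (fun i => (B i i).re)
    simpa using h
  rw [htr, htrB, div_le_iff₀ (show (0:ℝ) < d from Nat.cast_pos.mpr hd)]
  calc (∑ i, (B i i).re) ^ 2 ≤ d * ∑ i, (B i i).re ^ 2 := hcs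
    _ ≤ d * ∑ i, ∑ j, Complex.normSq (B i j) := by
        exact mul_le_mul_of_nonneg_left hdiag (Nat.cast_nonneg d)
    _ = (∑ i, ∑ j, Complex.normSq (B i j)) * d := mul_comm _ _

lemma part1 : (((Mop A)ᴴ * Mop A).trace).re
    = ∑ k, ∑ l, ‖((A k)ᴴ * A l).trace‖ ^ 2 := by
  rw [MopH_mul]
  simp only [trace_sum, trace_kronecker, trace_map_conj]
  rw [Complex.re_sum]
  refine Finset.sum_congr rfl fun k _ => ?_
  rw [Complex.re_sum]
  refine Finset.sum_congr rfl fun l _ => ?_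
  rw [Complex.mul_conj, Complex.ofReal_re, ← Complex.sq_norm]

end Main

/-- For `M = ∑ₖ Aₖ ⊗ Āₖ`:
`Tr(MᴴM) = ∑_{k,l}|Tr(AₖᴴAₗ)|² = d_in/d_out + η²`; the largest eigenvalue of
`MᴴM` is at least `d_in/d_out`; the remaining eigenvalues sum to at most `η²`;
and `⟨Ψ|MMᴴ|Ψ⟩ = d_in/d_out`. -/
theorem stmt8 {K din dout : ℕ} (hdin : 0 < din) (hdout : 0 < dout)
    (A : Fin K → Matrix (Fin dout) (Fin din) ℂ)
    (hA : ∑ k, (A k)ᴴ * A k = 1) :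
    ((((Mop A)ᴴ * Mop A).trace).re
        = ∑ k, ∑ l, ‖((A k)ᴴ * A l).trace‖ ^ 2)
    ∧ ((((Mop A)ᴴ * Mop A).trace).re
        = (din : ℝ) / (dout : ℝ)
          + ((∑ k, ∑ l, ‖((A k)ᴴ * A l).trace‖ ^ 2)
              - (din : ℝ) / (dout : ℝ)))
    ∧ ((din : ℝ) / (dout : ℝ)
        ≤ ⨆ i, (Matrix.isHermitian_conjTranspose_mul_self (Mop A)).eigenvalues i)
    ∧ ((∑ i, (Matrix.isHermitian_conjTranspose_mul_self (Mop A)).eigenvalues i)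
          - (⨆ i, (Matrix.isHermitian_conjTranspose_mul_self (Mop A)).eigenvalues i)
        ≤ (∑ k, ∑ l, ‖((A k)ᴴ * A l).trace‖ ^ 2)
            - (din : ℝ) / (dout : ℝ))
    ∧ ((star (maxEnt dout) ⬝ᵥ (Mop A * (Mop A)ᴴ).mulVec (maxEnt dout)).re
        = (din : ℝ) / (dout : ℝ)) := by
  have hne : Nonempty (Fin din × Fin din) := ⟨(⟨0, hdin⟩, ⟨0, hdin⟩)⟩
  set B : Matrix (Fin dout) (Fin dout) ℂ := ∑ k, A k * (A k)ᴴ with hBdef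
  have hB : B.IsHermitian := by
    rw [Matrix.IsHermitian, hBdef, conjTranspose_sum]
    exact Finset.sum_congr rfl fun k _ => Matrix.isHermitian_mul_conjTranspose_self (A k)
  -- value of the Rayleigh quotient at maxEnt din
  have hq : star (maxEnt din) ⬝ᵥ ((Mop A)ᴴ * Mop A) *ᵥ (maxEnt din)
      = ((din : ℂ))⁻¹ * ((B * B).trace) := by
    rw [MopH_mul, dot_mulVec_sum]
    simp only [dot_mulVec_sum, dot_maxEnt_kron, sum_conj_eq_trace, ← Finset.mul_sum]
    rw [tr2]
  -- part 3
  have part3 : (din : ℝ) / (dout : ℝ)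
      ≤ ⨆ i, (Matrix.isHermitian_conjTranspose_mul_self (Mop A)).eigenvalues i := by
    refine le_trans ?_ (rayleigh (Matrix.isHermitian_conjTranspose_mul_self (Mop A))
      (maxEnt din) (maxEnt_norm hdin))
    rw [hq]
    have h1 : (((din : ℂ))⁻¹ * ((B * B).trace)).re = (din : ℝ)⁻¹ * ((B * B).trace).re := by
      rw [show ((din : ℂ))⁻¹ = (((din : ℝ)⁻¹ : ℝ) : ℂ) by push_cast; ring]
      exact Complex.re_ofReal_mul _ _
    rw [h1]
    have hcs := cs hdout hB
    rw [trB A hA] at hcs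
    simp only [Complex.natCast_re] at hcs
    have hd : (0:ℝ) < din := Nat.cast_pos.mpr hdin
    calc (din : ℝ) / (dout : ℝ) = (din : ℝ)⁻¹ * ((din : ℝ) ^ 2 / (dout : ℝ)) := by
          field_simp
      _ ≤ (din : ℝ)⁻¹ * ((B * B).trace).re :=
          mul_le_mul_of_nonneg_left hcs (inv_nonneg.mpr hd.le)
  refine ⟨part1 A, by rw [part1 A]; ring, part3, ?_, ?_⟩
  · have hsum : (∑ i, (Matrix.isHermitian_conjTranspose_mul_self (Mop A)).eigenvalues i)
        = ∑ k, ∑ l, ‖((A k)ᴴ * A l).trace‖ ^ 2 := by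
      rw [← trace_re_eq_sum_eigenvalues, part1 A]
    rw [hsum]
    linarith [part3]
  · rw [Mop_mulH, dot_mulVec_sum]
    simp only [dot_mulVec_sum, dot_maxEnt_kron, sum_conj_eq_trace, ← Finset.mul_sum]
    rw [tr1 A hA,
      show ((dout : ℂ))⁻¹ * (din : ℂ) = (((din : ℝ) / (dout : ℝ) : ℝ) : ℂ) by push_cast; ring,
      Complex.ofReal_re]
end

section
/- For a POVM {λ_i |φ_i⟩⟨φ_i|} on C^{d_anc}⊗C^{d_out} with |φ_i⟩ = (B_i ⊗ I)|Ψ_{d_out}⟩ and Tr(B_i B_i†) = d_out: for every X ∈ C^{d_anc×d_anc} one has Σ_i λ_i B_i† X B_i = d_out·Tr(X)·I_{d_out}, and in particular Σ_i λ_i B_i B_i† = d_out²·I_{d_anc}. -/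
open Matrix BigOperators

/-- The vector `|φᵢ⟩ = (Bᵢ ⊗ I)|Ψ_{d_out}⟩`, with components
`(1/√d_out)·(Bᵢ)_{a,b}`. -/
noncomputable def povmVec {danc dout : ℕ} (B : Matrix (Fin danc) (Fin dout) ℂ) :
    Fin danc × Fin dout → ℂ :=
  fun p => ((Real.sqrt dout : ℝ) : ℂ)⁻¹ * B p.1 p.2

/-- For a POVM `{λᵢ|φᵢ⟩⟨φᵢ|}` with `|φᵢ⟩ = (Bᵢ⊗I)|Ψ_{d_out}⟩` and
`Tr(BᵢBᵢᴴ) = d_out`: for every `X`, `∑ᵢ λᵢ Bᵢᴴ X Bᵢ = d_out·Tr(X)·I`, and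
in particular `∑ᵢ λᵢ Bᵢ Bᵢᴴ = d_out²·I`. -/
theorem stmt15 {danc dout : ℕ} {ι : Type*} [Fintype ι]
    (lam : ι → ℝ) (hlam : ∀ i, 0 < lam i)
    (B : ι → Matrix (Fin danc) (Fin dout) ℂ)
    (hB : ∀ i, (B i * (B i)ᴴ).trace = (dout : ℂ))
    (hPOVM : ∑ i, ((lam i : ℝ) : ℂ) •
        Matrix.vecMulVec (povmVec (B i)) (star (povmVec (B i))) = 1) :
    (∀ X : Matrix (Fin danc) (Fin danc) ℂ,
        ∑ i, ((lam i : ℝ) : ℂ) • ((B i)ᴴ * X * B i)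
          = ((dout : ℂ) * X.trace) • (1 : Matrix (Fin dout) (Fin dout) ℂ))
    ∧ (∑ i, ((lam i : ℝ) : ℂ) • (B i * (B i)ᴴ)
          = ((dout : ℂ) ^ 2) • (1 : Matrix (Fin danc) (Fin danc) ℂ)) := by
  rcases Nat.eq_zero_or_pos dout with h0 | hpos
  · subst h0
    constructor
    · intro X
      ext b b'
      exact b.elim0
    · ext a a'
      simp [Matrix.sum_apply, Matrix.mul_apply, Matrix.smul_apply]
  have key : ∀ (a a' : Fin danc) (b b' : Fin dout),
      ∑ i, ((lam i : ℝ):ℂ) * (B i a b * (starRingEnd ℂ) (B i a' b'))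
        = (dout:ℂ) * (if (a, b) = (a', b') then 1 else 0) := by
    intro a a' b b'
    have hd : ((Real.sqrt dout : ℝ):ℂ) * ((Real.sqrt dout : ℝ):ℂ) = (dout:ℂ) := by
      rw [← Complex.ofReal_mul, Real.mul_self_sqrt (by positivity)]
      norm_cast
    have hcne : ((Real.sqrt dout : ℝ):ℂ) ≠ 0 := by
      simp [Real.sqrt_ne_zero', hpos.ne']
    have h := congrFun (congrFun hPOVM (a, b)) (a', b')
    simp only [Matrix.sum_apply, Matrix.smul_apply, Matrix.vecMulVec_apply, povmVec,
      Pi.star_apply, Matrix.one_apply, smul_eq_mul, star_mul', map_inv₀, Complex.conj_ofReal,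
      RCLike.star_def] at h
    rw [show (dout:ℂ) * (if (a, b) = (a', b') then 1 else 0)
          = (dout:ℂ) * ∑ i, ((lam i:ℝ):ℂ) *
              (((Real.sqrt dout : ℝ):ℂ)⁻¹ * B i a b *
                (((Real.sqrt dout : ℝ):ℂ)⁻¹ * (starRingEnd ℂ) (B i a' b'))) from by rw [h],
      Finset.mul_sum]
    apply Finset.sum_congr rfl
    intro i _
    field_simp
    rw [sq, hd]
  constructor
  · intro X
    ext b b'
    simp only [Matrix.sum_apply, Matrix.smul_apply, Matrix.mul_apply,
      Matrix.conjTranspose_apply, smul_eq_mul, Matrix.smul_apply, Matrix.one_apply,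
      Finset.mul_sum, Finset.sum_mul]
    rw [Finset.sum_comm]
    have step : ∀ a' : Fin danc,
        ∑ i, ∑ a, ((lam i:ℝ):ℂ) * ((starRingEnd ℂ) (B i a b) * X a a' * B i a' b')
          = ∑ a, X a a' * ((dout:ℂ) * (if (a', b') = (a, b) then 1 else 0)) := by
      intro a'
      rw [Finset.sum_comm]
      apply Finset.sum_congr rfl
      intro a _
      rw [← key a' a b' b, Finset.mul_sum]
      apply Finset.sum_congr rfl
      intro i _
      ring
    calc ∑ a', ∑ i, ∑ a, ((lam i:ℝ):ℂ) * ((starRingEnd ℂ) (B i a b) * X a a' * B i a' b')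
        = ∑ a', ∑ a, X a a' * ((dout:ℂ) * (if (a', b') = (a, b) then 1 else 0)) := by
          exact Finset.sum_congr rfl fun a' _ => step a'
      _ = ∑ a', X a' a' * ((dout:ℂ) * (if b' = b then 1 else 0)) := by
          apply Finset.sum_congr rfl
          intro a' _
          rw [Finset.sum_eq_single a']
          · simp [Prod.ext_iff, eq_comm]
          · intro a _ ha
            simp only [Prod.ext_iff]
            rw [if_neg (fun h => ha h.1.symm)]
            ring
          · simp
      _ = (dout:ℂ) * X.trace * (if b = b' then 1 else 0) := by
          by_cases hbb : b = b'
          · simp [hbb, Matrix.trace, Matrix.diag, Finset.mul_sum, mul_comm]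
          · simp [hbb, Ne.symm hbb]
  · ext a a'
    simp only [Matrix.sum_apply, Matrix.smul_apply, Matrix.mul_apply,
      Matrix.conjTranspose_apply, smul_eq_mul, Matrix.one_apply, Finset.mul_sum]
    rw [Finset.sum_comm]
    calc ∑ b, ∑ i, ((lam i:ℝ):ℂ) * (B i a b * (starRingEnd ℂ) (B i a' b))
        = ∑ b : Fin dout, (dout:ℂ) * (if (a, b) = (a', b) then 1 else 0) := by
          exact Finset.sum_congr rfl fun b _ => key a a' b b
      _ = (dout:ℂ)^2 * (if a = a' then 1 else 0) := by
          by_cases h : a = a' <;>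
            simp [h, Prod.ext_iff, sq, Finset.card_univ, mul_comm]
end
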